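/- Let s : ℕ → ℝ satisfy 0 ≤ s r < 1 for every r ≥ 1, and suppose Z := ∑_{r ≥ 1} (φ(r)/r) · log(1/(1 − s r)) satisfies 0 < Z < ∞, where φ is Euler's totient function. Define q : {r : ℕ // r ≥ 1} × {j : ℕ // j ≥ 1} → ℝ by q(r, j) = φ(r) · (s r)^j / (r · j · Z). Then q is a probability mass function (nonnegative with total sum 1), and its pushforward under the map (r, j) ↦ r · j assigns to each n ≥ 1 the mass (1/(n·Z)) · ∑_{d ∣ n} φ(d) · (s d)^(n/d). -/

import Mathlib

/-- Equiv between ℕ and positive naturals as subtype. -/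
def posEquiv : ℕ ≃ {j : ℕ // 1 ≤ j} where
  toFun n := ⟨n + 1, Nat.succ_le_succ n.zero_le⟩
  invFun j := (j : ℕ) - 1
  left_inv n := by simp
  right_inv j := by
    ext
    exact Nat.succ_pred_eq_of_pos j.2

lemma logSeries (x : ℝ) (h0 : 0 ≤ x) (h1 : x < 1) :
    HasSum (fun j : {j : ℕ // 1 ≤ j} => x ^ (j : ℕ) / ((j : ℕ) : ℝ))
      (Real.log (1 / (1 - x))) := by
  have h := Real.hasSum_pow_div_log_of_abs_lt_one (x := x) (by rw [abs_of_nonneg h0]; exact h1)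
  rw [one_div, Real.log_inv]
  rw [← posEquiv.hasSum_iff]
  convert h using 2 with n
  simp [posEquiv]


/-- Divisors of `n` correspond to the fiber of `(r, j) ↦ r * j` over `n`. -/
def divEquiv (n : ℕ) (hn : 1 ≤ n) :
    {d // d ∈ n.divisors} ≃
      {p : {r : ℕ // 1 ≤ r} × {j : ℕ // 1 ≤ j} // ((p.1 : ℕ)) * ((p.2 : ℕ)) = n} where
  toFun d := ⟨(⟨d.1, Nat.one_le_iff_ne_zero.mpr (Nat.pos_of_mem_divisors d.2).ne'⟩,
      ⟨n / d.1, Nat.one_le_iff_ne_zero.mpr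
        (Nat.div_pos (Nat.le_of_dvd (Nat.lt_of_lt_of_le Nat.zero_lt_one hn)
          (Nat.dvd_of_mem_divisors d.2)) (Nat.pos_of_mem_divisors d.2)).ne'⟩),
    Nat.mul_div_cancel' (Nat.dvd_of_mem_divisors d.2)⟩
  invFun p := ⟨(p.1.1 : ℕ), Nat.mem_divisors.mpr ⟨⟨(p.1.2 : ℕ), p.2.symm⟩, by omega⟩⟩
  left_inv d := by ext; rfl
  right_inv p := by
    have hp := p.2
    have h1pos : 0 < (p.1.1 : ℕ) := p.1.1.2
    apply Subtype.ext
    apply Prod.ext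
    · rfl
    · apply Subtype.ext
      show n / (p.1.1 : ℕ) = (p.1.2 : ℕ)
      have h := Nat.mul_div_cancel_left ((p.1.2 : ℕ)) h1pos
      rw [hp] at h
      exact h

theorem stmt_7 (s : ℕ → ℝ) (h0 : ∀ r, 1 ≤ r → 0 ≤ s r) (h1 : ∀ r, 1 ≤ r → s r < 1)
    (Z : ℝ)
    (hZdef : Z = ∑' r : {r : ℕ // 1 ≤ r},
      ((Nat.totient (r : ℕ) : ℝ) / ((r : ℕ) : ℝ)) * Real.log (1 / (1 - s (r : ℕ))))
    (hZsum : Summable fun r : {r : ℕ // 1 ≤ r} =>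
      ((Nat.totient (r : ℕ) : ℝ) / ((r : ℕ) : ℝ)) * Real.log (1 / (1 - s (r : ℕ))))
    (hZpos : 0 < Z)
    (q : {r : ℕ // 1 ≤ r} × {j : ℕ // 1 ≤ j} → ℝ)
    (hqdef : ∀ p : {r : ℕ // 1 ≤ r} × {j : ℕ // 1 ≤ j},
      q p = (Nat.totient (p.1 : ℕ) : ℝ) * s (p.1 : ℕ) ^ (p.2 : ℕ)
              / (((p.1 : ℕ) : ℝ) * ((p.2 : ℕ) : ℝ) * Z)) :
    (∀ p, 0 ≤ q p) ∧ Summable q ∧ (∑' p, q p = 1) ∧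
    (∀ n : ℕ, 1 ≤ n →
      ∑' p : {p : {r : ℕ // 1 ≤ r} × {j : ℕ // 1 ≤ j} //
                ((p.1 : ℕ)) * ((p.2 : ℕ)) = n},
          q (p : {r : ℕ // 1 ≤ r} × {j : ℕ // 1 ≤ j})
        = (1 / (((n : ℝ)) * Z)) *
            ∑ d ∈ n.divisors, (Nat.totient d : ℝ) * s d ^ (n / d)) := by
  -- rewrite of q as a product form
  have hq' : ∀ (r : {r : ℕ // 1 ≤ r}) (j : {j : ℕ // 1 ≤ j}),
      q (r, j) = ((Nat.totient (r : ℕ) : ℝ) / (((r : ℕ) : ℝ) * Z)) *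
        (s (r : ℕ) ^ (j : ℕ) / ((j : ℕ) : ℝ)) := by
    intro r j
    rw [hqdef]
    field_simp
  have hqnn : ∀ p, 0 ≤ q p := by
    intro p
    rw [hqdef]
    apply div_nonneg
    · exact mul_nonneg (Nat.cast_nonneg _) (pow_nonneg (h0 _ p.1.2) _)
    · positivity
  -- inner sums
  have hinner : ∀ r : {r : ℕ // 1 ≤ r},
      HasSum (fun j : {j : ℕ // 1 ≤ j} => q (r, j))
        (((Nat.totient (r : ℕ) : ℝ) / (((r : ℕ) : ℝ) * Z)) *
          Real.log (1 / (1 - s (r : ℕ)))) := by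
    intro r
    have := (logSeries (s (r : ℕ)) (h0 _ r.2) (h1 _ r.2)).mul_left
      ((Nat.totient (r : ℕ) : ℝ) / (((r : ℕ) : ℝ) * Z))
    convert this using 2 with j
    · rfl
    exact hq' r j
  have houter : Summable (fun r : {r : ℕ // 1 ≤ r} =>
      ((Nat.totient (r : ℕ) : ℝ) / (((r : ℕ) : ℝ) * Z)) *
        Real.log (1 / (1 - s (r : ℕ)))) := by
    have := hZsum.mul_left (1 / Z)
    convert this using 2 with r
    · rfl
    field_simp
  have houter_eq : ∀ r : {r : ℕ // 1 ≤ r},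
      ((Nat.totient (r : ℕ) : ℝ) / (((r : ℕ) : ℝ) * Z)) * Real.log (1 / (1 - s (r : ℕ)))
      = (1 / Z) * (((Nat.totient (r : ℕ) : ℝ) / ((r : ℕ) : ℝ)) *
          Real.log (1 / (1 - s (r : ℕ)))) := by
    intro r
    field_simp
  have hsummable : Summable q := by
    rw [summable_prod_of_nonneg hqnn]
    constructor
    · exact fun r => (hinner r).summable
    · apply houter.congr
      intro r
      exact ((hinner r).tsum_eq).symm
  have htsum : ∑' p, q p = 1 := by
    rw [Summable.tsum_prod hsummable]
    have : (fun r : {r : ℕ // 1 ≤ r} => ∑' j, q (r, j)) =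
        fun r : {r : ℕ // 1 ≤ r} => ((Nat.totient (r : ℕ) : ℝ) / (((r : ℕ) : ℝ) * Z)) *
          Real.log (1 / (1 - s (r : ℕ))) := by
      funext r
      exact (hinner r).tsum_eq
    rw [this]
    have : ∑' r : {r : ℕ // 1 ≤ r},
        ((Nat.totient (r : ℕ) : ℝ) / (((r : ℕ) : ℝ) * Z)) * Real.log (1 / (1 - s (r : ℕ)))
        = (1 / Z) * ∑' r : {r : ℕ // 1 ≤ r},
          ((Nat.totient (r : ℕ) : ℝ) / ((r : ℕ) : ℝ)) * Real.log (1 / (1 - s (r : ℕ))) := by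
      rw [← tsum_mul_left]
      exact tsum_congr houter_eq
    rw [this, ← hZdef]
    field_simp
  refine ⟨hqnn, hsummable, htsum, ?_⟩
  intro n hn
  -- bijection between divisors and the fiber
  calc ∑' p : {p : {r : ℕ // 1 ≤ r} × {j : ℕ // 1 ≤ j} // ((p.1 : ℕ)) * ((p.2 : ℕ)) = n}, q (p : {r : ℕ // 1 ≤ r} × {j : ℕ // 1 ≤ j})
      = ∑' d : {d // d ∈ n.divisors}, q (((divEquiv n hn) d) : {r : ℕ // 1 ≤ r} × {j : ℕ // 1 ≤ j}) :=
        ((divEquiv n hn).tsum_eq _).symm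
    _ = ∑ d ∈ n.divisors, (Nat.totient d : ℝ) * s d ^ (n / d) / ((n : ℝ) * Z) := by
        rw [tsum_fintype, ← Finset.sum_attach n.divisors
          (fun d => (Nat.totient d : ℝ) * s d ^ (n / d) / ((n : ℝ) * Z))]
        apply Finset.sum_congr rfl
        intro d _
        rw [hqdef]
        have hd : (d : ℕ) ∣ n := Nat.dvd_of_mem_divisors d.2
        have : ((d : ℕ) : ℝ) * ((n / (d : ℕ) : ℕ) : ℝ) = (n : ℝ) := by
          rw [← Nat.cast_mul, Nat.mul_div_cancel' hd]
        rw [show ((((divEquiv n hn) d : {r : ℕ // 1 ≤ r} × {j : ℕ // 1 ≤ j}).1 : ℕ) : ℕ) = (d : ℕ) from rfl,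
          show (((divEquiv n hn) d : {r : ℕ // 1 ≤ r} × {j : ℕ // 1 ≤ j}).2 : ℕ) = n / (d : ℕ) from rfl, this]
    _ = (1 / ((n : ℝ) * Z)) * ∑ d ∈ n.divisors, (Nat.totient d : ℝ) * s d ^ (n / d) := by
        rw [Finset.mul_sum]
        apply Finset.sum_congr rfl
        intro d _
        ring
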